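/- Let T = (V, ≻) be a tournament with top cycle C. Then in every Slater order > of T, every vertex of C precedes (is greater than) every vertex of V∖C. Consequently, the Slater set of T equals the Slater set of the subtournament of T induced on C. -/

import Mathlib

open scoped Classical

variable {V : Type*}

/-- A tournament: an irreflexive relation such that for distinct `u, v`
exactly one of `r u v` and `r v u` holds. -/
def IsTournament (r : V → V → Prop) : Prop :=
  (∀ v, ¬ r v v) ∧ ∀ u v : V, u ≠ v → (r u v ↔ ¬ r v u)

/-- `D` is a dominant set: it is nonempty and every vertex in `D` dominates
every vertex outside `D`. -/
def IsDominant (r : V → V → Prop) (D : Set V) : Prop :=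
  D.Nonempty ∧ ∀ x ∈ D, ∀ y ∉ D, r x y

/-- `C` is the top cycle: the smallest dominant set. -/
def IsTopCycle (r : V → V → Prop) (C : Set V) : Prop :=
  IsDominant r C ∧ ∀ D : Set V, IsDominant r D → C ⊆ D

/-- The Slater score of a strict order `s` w.r.t. the dominance relation `r`. -/
noncomputable def slaterScore {W : Type*} (r s : W → W → Prop) : ℕ :=
  {p : W × W | s p.1 p.2 ∧ r p.1 p.2}.ncard

/-- `s` is a Slater order for the tournament `r`: a strict total order of maximum Slater score. -/
def IsSlaterOrder {W : Type*} (r s : W → W → Prop) : Prop :=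
  IsStrictTotalOrder W s ∧
    ∀ s' : W → W → Prop, IsStrictTotalOrder W s' → slaterScore r s' ≤ slaterScore r s

/-- The Slater set: maximum elements of Slater orders. -/
def slaterSet {W : Type*} (r : W → W → Prop) : Set W :=
  {m | ∃ s : W → W → Prop, IsSlaterOrder r s ∧ ∀ x, x ≠ m → s m x}


section SlaterAux

variable (r : V → V → Prop) (C : Set V)

private def SlaterS1 (u : V → V → Prop) : Set (V × V) :=
  {p | p.1 ∈ C ∧ p.2 ∈ C ∧ u p.1 p.2 ∧ r p.1 p.2}

private def SlaterS2 (u : V → V → Prop) : Set (V × V) :=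
  {p | p.1 ∉ C ∧ p.2 ∉ C ∧ u p.1 p.2 ∧ r p.1 p.2}

private def SlaterS3 (u : V → V → Prop) : Set (V × V) :=
  {p | p.1 ∈ C ∧ p.2 ∉ C ∧ u p.1 p.2 ∧ r p.1 p.2}

/-- Put `C` on top (ordered by `p`), the complement below (ordered by `q`). -/
private def slaterComb (p q : V → V → Prop) : V → V → Prop := fun x y =>
  (x ∈ C ∧ y ∉ C) ∨ (x ∈ C ∧ y ∈ C ∧ p x y) ∨ (x ∉ C ∧ y ∉ C ∧ q x y)

private lemma slaterComb_sto (p q : V → V → Prop)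
    (hpi : ∀ x ∈ C, ¬ p x x)
    (hpt : ∀ x ∈ C, ∀ y ∈ C, ∀ z ∈ C, p x y → p y z → p x z)
    (hptot : ∀ x ∈ C, ∀ y ∈ C, x ≠ y → p x y ∨ p y x)
    (hqi : ∀ x, x ∉ C → ¬ q x x)
    (hqt : ∀ x, x ∉ C → ∀ y, y ∉ C → ∀ z, z ∉ C → q x y → q y z → q x z)
    (hqtot : ∀ x, x ∉ C → ∀ y, y ∉ C → x ≠ y → q x y ∨ q y x) :
    IsStrictTotalOrder V (slaterComb C p q) := by
  refine { trichotomous := ?_, irrefl := ?_, trans := ?_ }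
  · intro a b
    suffices H : slaterComb C p q a b ∨ a = b ∨ slaterComb C p q b a from
      fun h1 h2 => (H.resolve_left h1).resolve_right h2
    by_cases ha : a ∈ C <;> by_cases hb : b ∈ C
    · by_cases hab : a = b
      · exact Or.inr (Or.inl hab)
      · rcases hptot a ha b hb hab with h | h
        · exact Or.inl (Or.inr (Or.inl ⟨ha, hb, h⟩))
        · exact Or.inr (Or.inr (Or.inr (Or.inl ⟨hb, ha, h⟩)))
    · exact Or.inl (Or.inl ⟨ha, hb⟩)
    · exact Or.inr (Or.inr (Or.inl ⟨hb, ha⟩))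
    · by_cases hab : a = b
      · exact Or.inr (Or.inl hab)
      · rcases hqtot a ha b hb hab with h | h
        · exact Or.inl (Or.inr (Or.inr ⟨ha, hb, h⟩))
        · exact Or.inr (Or.inr (Or.inr (Or.inr ⟨hb, ha, h⟩)))
  · intro a h
    rcases h with ⟨ha, ha'⟩ | ⟨ha, _, h⟩ | ⟨ha, _, h⟩
    · exact ha' ha
    · exact hpi a ha h
    · exact hqi a ha h
  · intro a b c hab hbc
    rcases hab with ⟨ha, hb⟩ | ⟨ha, hb, hab⟩ | ⟨ha, hb, hab⟩ <;>
      rcases hbc with ⟨hb', hc⟩ | ⟨hb', hc, hbc⟩ | ⟨hb', hc, hbc⟩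
    · exact absurd hb' hb
    · exact absurd hb' hb
    · exact Or.inl ⟨ha, hc⟩
    · exact Or.inl ⟨ha, hc⟩
    · exact Or.inr (Or.inl ⟨ha, hc, hpt a ha b hb c hc hab hbc⟩)
    · exact absurd hb hb'
    · exact absurd hb' hb
    · exact absurd hb' hb
    · exact Or.inr (Or.inr ⟨ha, hc, hqt a ha b hb c hc hab hbc⟩)

private lemma slater_asymm {s : V → V → Prop} (h : IsStrictTotalOrder V s) {a b : V}
    (hab : s a b) : ¬ s b a := by
  haveI := h; exact fun hba => irrefl_of s a (trans_of s hab hba)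

private lemma score_decomp [Fintype V] (hT : IsTournament r)
    (hdom : ∀ x ∈ C, ∀ y, y ∉ C → r x y) (u : V → V → Prop) :
    slaterScore r u = (SlaterS1 r C u).ncard + (SlaterS2 r C u).ncard
      + (SlaterS3 r C u).ncard := by
  have hA : {p : V × V | u p.1 p.2 ∧ r p.1 p.2}
      = (SlaterS1 r C u ∪ SlaterS2 r C u) ∪ SlaterS3 r C u := by
    ext ⟨x, y⟩
    simp only [SlaterS1, SlaterS2, SlaterS3, Set.mem_union, Set.mem_setOf_eq]
    constructor
    · rintro ⟨hu, hr⟩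
      by_cases hx : x ∈ C <;> by_cases hy : y ∈ C
      · exact Or.inl (Or.inl ⟨hx, hy, hu, hr⟩)
      · exact Or.inr ⟨hx, hy, hu, hr⟩
      · have hne : y ≠ x := fun h => hx (h ▸ hy)
        exact absurd hr ((hT.2 y x hne).mp (hdom y hy x hx))
      · exact Or.inl (Or.inr ⟨hx, hy, hu, hr⟩)
    · rintro ((⟨_, _, hu, hr⟩ | ⟨_, _, hu, hr⟩) | ⟨_, _, hu, hr⟩) <;> exact ⟨hu, hr⟩
  have d12 : Disjoint (SlaterS1 r C u) (SlaterS2 r C u) :=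
    Set.disjoint_left.mpr fun p h1 h2 => h2.1 h1.1
  have d123 : Disjoint (SlaterS1 r C u ∪ SlaterS2 r C u) (SlaterS3 r C u) :=
    Set.disjoint_left.mpr fun p h h3 => by
      rcases h with h1 | h2
      · exact h3.2.1 h1.2.1
      · exact h2.1 h3.1
  rw [slaterScore, hA, Set.ncard_union_eq d123 (Set.toFinite _) (Set.toFinite _),
    Set.ncard_union_eq d12 (Set.toFinite _) (Set.toFinite _)]

private lemma S3_eq_prod (hdom : ∀ x ∈ C, ∀ y, y ∉ C → r x y) (u : V → V → Prop)
    (hresp : ∀ c ∈ C, ∀ v, v ∉ C → u c v) : SlaterS3 r C u = C ×ˢ Cᶜ := by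
  ext ⟨x, y⟩
  simp only [SlaterS3, Set.mem_setOf_eq, Set.mem_prod, Set.mem_compl_iff]
  exact ⟨fun h => ⟨h.1, h.2.1⟩, fun ⟨hx, hy⟩ => ⟨hx, hy, hresp x hx y hy, hdom x hx y hy⟩⟩

private lemma score_sub (u : V → V → Prop) :
    slaterScore (fun a b : C => r (a : V) (b : V)) (fun a b : C => u (a : V) (b : V))
      = (SlaterS1 r C u).ncard := by
  have hinj : Function.Injective
      (Prod.map (Subtype.val : C → V) (Subtype.val : C → V)) :=
    Function.Injective.prodMap Subtype.val_injective Subtype.val_injective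
  have himg : Prod.map (Subtype.val : C → V) (Subtype.val : C → V) ''
      {p : C × C | u (p.1 : V) (p.2 : V) ∧ r (p.1 : V) (p.2 : V)} = SlaterS1 r C u := by
    ext p
    simp only [Set.mem_image, SlaterS1, Set.mem_setOf_eq]
    constructor
    · rintro ⟨⟨a, b⟩, ⟨hu, hr⟩, rfl⟩
      exact ⟨a.2, b.2, hu, hr⟩
    · rintro ⟨hx, hy, hu, hr⟩
      exact ⟨(⟨p.1, hx⟩, ⟨p.2, hy⟩), ⟨hu, hr⟩, rfl⟩
  rw [slaterScore, ← himg, Set.ncard_image_of_injective _ hinj]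

private lemma S1_congr (u u' : V → V → Prop)
    (h : ∀ x ∈ C, ∀ y ∈ C, (u x y ↔ u' x y)) : SlaterS1 r C u = SlaterS1 r C u' := by
  ext ⟨x, y⟩
  simp only [SlaterS1, Set.mem_setOf_eq]
  constructor
  · rintro ⟨hx, hy, hu, hr⟩; exact ⟨hx, hy, (h x hx y hy).mp hu, hr⟩
  · rintro ⟨hx, hy, hu, hr⟩; exact ⟨hx, hy, (h x hx y hy).mpr hu, hr⟩

private lemma S2_congr (u u' : V → V → Prop)
    (h : ∀ x, x ∉ C → ∀ y, y ∉ C → (u x y ↔ u' x y)) :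
    SlaterS2 r C u = SlaterS2 r C u' := by
  ext ⟨x, y⟩
  simp only [SlaterS2, Set.mem_setOf_eq]
  constructor
  · rintro ⟨hx, hy, hu, hr⟩; exact ⟨hx, hy, (h x hx y hy).mp hu, hr⟩
  · rintro ⟨hx, hy, hu, hr⟩; exact ⟨hx, hy, (h x hx y hy).mpr hu, hr⟩

private lemma comb_S1 (p q : V → V → Prop) :
    SlaterS1 r C (slaterComb C p q) = SlaterS1 r C p :=
  S1_congr r C _ p fun x hx y hy => by
    constructor
    · rintro (⟨_, hy'⟩ | ⟨_, _, h⟩ | ⟨hx', _⟩)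
      · exact absurd hy hy'
      · exact h
      · exact absurd hx hx'
    · intro h; exact Or.inr (Or.inl ⟨hx, hy, h⟩)

private lemma comb_S2 (p q : V → V → Prop) :
    SlaterS2 r C (slaterComb C p q) = SlaterS2 r C q :=
  S2_congr r C _ q fun x hx y hy => by
    constructor
    · rintro (⟨hx', _⟩ | ⟨hx', _⟩ | ⟨_, _, h⟩)
      · exact absurd hx' hx
      · exact absurd hx' hx
      · exact h
    · intro h; exact Or.inr (Or.inr ⟨hx, hy, h⟩)

/-- Lift a relation on the subtype `C` to `V`. -/
private def slaterLift (t : C → C → Prop) : V → V → Prop := fun x y =>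
  ∃ hx : x ∈ C, ∃ hy : y ∈ C, t ⟨x, hx⟩ ⟨y, hy⟩

private lemma sto_restrict {s : V → V → Prop} (h : IsStrictTotalOrder V s) :
    IsStrictTotalOrder C (fun a b : C => s (a : V) (b : V)) := by
  haveI := h
  refine { trichotomous := ?_, irrefl := ?_, trans := ?_ }
  · intro a b
    suffices H : s (a : V) (b : V) ∨ a = b ∨ s (b : V) (a : V) from
      fun h1 h2 => (H.resolve_left h1).resolve_right h2
    rcases trichotomous_of s (a : V) (b : V) with h | h | h
    · exact Or.inl h
    · exact Or.inr (Or.inl (Subtype.ext h))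
    · exact Or.inr (Or.inr h)
  · intro a; exact irrefl_of s (a : V)
  · intro a b c hab hbc; exact trans_of s hab hbc

private lemma comb_lift_sto {t : C → C → Prop} (ht : IsStrictTotalOrder C t)
    {s : V → V → Prop} (hs : IsStrictTotalOrder V s) :
    IsStrictTotalOrder V (slaterComb C (slaterLift C t) s) := by
  haveI := ht; haveI := hs
  refine slaterComb_sto C _ s ?_ ?_ ?_ (fun x _ => irrefl_of s x)
    (fun x _ y _ z _ h1 h2 => trans_of s h1 h2)
    (fun x _ y _ hxy => (trichotomous_of s x y).imp_right fun h => h.resolve_left hxy)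
  · rintro x hx ⟨h1, h2, h⟩
    exact irrefl_of t ⟨x, h1⟩ h
  · rintro x hx y hy z hz ⟨h1, h2, ha⟩ ⟨h3, h4, hb⟩
    exact ⟨h1, h4, trans_of t ha hb⟩
  · intro x hx y hy hxy
    rcases trichotomous_of t ⟨x, hx⟩ ⟨y, hy⟩ with h | h | h
    · exact Or.inl ⟨hx, hy, h⟩
    · exact absurd (congrArg Subtype.val h) hxy
    · exact Or.inr ⟨hy, hx, h⟩

private lemma comb_self_sto {s : V → V → Prop} (hs : IsStrictTotalOrder V s) :
    IsStrictTotalOrder V (slaterComb C s s) := by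
  haveI := hs
  exact slaterComb_sto C s s (fun x _ => irrefl_of s x)
    (fun x _ y _ z _ h1 h2 => trans_of s h1 h2)
    (fun x _ y _ hxy => (trichotomous_of s x y).imp_right fun h => h.resolve_left hxy)
    (fun x _ => irrefl_of s x)
    (fun x _ y _ z _ h1 h2 => trans_of s h1 h2)
    (fun x _ y _ hxy => (trichotomous_of s x y).imp_right fun h => h.resolve_left hxy)

private lemma S1_lift (t : C → C → Prop) :
    (SlaterS1 r C (slaterLift C t)).ncard
      = slaterScore (fun a b : C => r (a : V) (b : V)) t := by
  rw [← score_sub r C (slaterLift C t), slaterScore, slaterScore]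
  congr 1
  ext p
  simp only [Set.mem_setOf_eq, slaterLift]
  constructor
  · rintro ⟨⟨h1, h2, h⟩, hr⟩; exact ⟨h, hr⟩
  · rintro ⟨h, hr⟩; exact ⟨⟨p.1.2, p.2.2, h⟩, hr⟩

private lemma exists_slater {W : Type*} [Fintype W] (rw : W → W → Prop) :
    ∃ s : W → W → Prop, IsSlaterOrder rw s := by
  classical
  set S : Set ℕ := {n | ∃ s : W → W → Prop, IsStrictTotalOrder W s ∧ slaterScore rw s = n}
    with hS
  have hne : S.Nonempty := ⟨slaterScore rw WellOrderingRel, WellOrderingRel, inferInstance, rfl⟩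
  have hbdd : BddAbove S := by
    refine ⟨(Set.univ : Set (W × W)).ncard, ?_⟩
    rintro n ⟨s, _, rfl⟩
    exact Set.ncard_le_ncard (Set.subset_univ _) (Set.toFinite _)
  obtain ⟨s, hsto, hscore⟩ := Nat.sSup_mem hne hbdd
  refine ⟨s, hsto, fun s' hs' => ?_⟩
  rw [hscore]
  exact le_csSup hbdd ⟨s', hs', rfl⟩

private lemma slater_resp [Fintype V] (hT : IsTournament r) (hC : IsTopCycle r C)
    (s : V → V → Prop) (hs : IsSlaterOrder r s) :
    ∀ c ∈ C, ∀ v, v ∉ C → s c v := by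
  by_contra h
  push_neg at h
  obtain ⟨c, hc, v, hv, hcv⟩ := h
  have hdom := hC.1.2
  haveI hs1 := hs.1
  set u := slaterComb C s s with hu
  have hu_sto : IsStrictTotalOrder V u := comb_self_sto C hs1
  have hds := score_decomp r C hT hdom s
  have hdu := score_decomp r C hT hdom u
  have h1 : SlaterS1 r C u = SlaterS1 r C s := comb_S1 r C s s
  have h2 : SlaterS2 r C u = SlaterS2 r C s := comb_S2 r C s s
  have h3u : SlaterS3 r C u = C ×ˢ Cᶜ :=
    S3_eq_prod r C hdom u fun c hc v hv => Or.inl ⟨hc, hv⟩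
  have h3s : (SlaterS3 r C s).ncard < (C ×ˢ Cᶜ : Set (V × V)).ncard := by
    refine Set.ncard_lt_ncard ⟨fun p hp => Set.mem_prod.mpr ⟨hp.1, hp.2.1⟩, fun hsup => ?_⟩
      (Set.toFinite _)
    exact hcv (hsup (Set.mem_prod.mpr ⟨hc, hv⟩) : (c, v) ∈ SlaterS3 r C s).2.2.1
  have hle := hs.2 u hu_sto
  rw [hds, hdu, h1, h2, h3u] at hle
  omega

end SlaterAux

/-- in every Slater order of a tournament, every vertex of the top
cycle `C` is greater than every vertex outside `C`; consequently the Slater set of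
the tournament equals the Slater set of the subtournament induced on `C`. -/
theorem slater_eq_slater_of_topCycle [Fintype V] (r : V → V → Prop)
    (hT : IsTournament r) (C : Set V) (hC : IsTopCycle r C) :
    (∀ s : V → V → Prop, IsSlaterOrder r s → ∀ c ∈ C, ∀ v, v ∉ C → s c v) ∧
    slaterSet r = Subtype.val '' slaterSet (fun a b : C => r (a : V) (b : V)) := by
  have hdom := hC.1.2
  have resp := slater_resp r C hT hC
  refine ⟨resp, ?_⟩
  ext m
  constructor
  · rintro ⟨s, hs, htop⟩
    haveI hs1 := hs.1
    obtain ⟨c0, hc0⟩ := hC.1.1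
    have hmC : m ∈ C := by
      by_contra hm
      have h1 : s c0 m := resp s hs c0 hc0 m hm
      have hne : c0 ≠ m := fun h => hm (h ▸ hc0)
      exact slater_asymm hs1 h1 (htop c0 hne)
    refine ⟨⟨m, hmC⟩, ⟨fun a b : C => s (a : V) (b : V), ⟨sto_restrict C hs1, ?_⟩, ?_⟩, rfl⟩
    · intro t' ht'
      set u := slaterComb C (slaterLift C t') s with hu
      have hu_sto : IsStrictTotalOrder V u := comb_lift_sto C ht' hs1
      have hdu := score_decomp r C hT hdom u
      have hds := score_decomp r C hT hdom s
      have e1 : SlaterS1 r C u = SlaterS1 r C (slaterLift C t') := comb_S1 r C _ s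
      have e2 : SlaterS2 r C u = SlaterS2 r C s := comb_S2 r C _ s
      have e3u : SlaterS3 r C u = C ×ˢ Cᶜ :=
        S3_eq_prod r C hdom u fun c hc v hv => Or.inl ⟨hc, hv⟩
      have e3s : SlaterS3 r C s = C ×ˢ Cᶜ := S3_eq_prod r C hdom s (resp s hs)
      have eL := S1_lift r C t'
      have eS := score_sub r C s
      have hle := hs.2 u hu_sto
      rw [hdu, hds, e1, e2, e3u, e3s] at hle
      omega
    · intro x hx
      exact htop (x : V) fun h => hx (Subtype.ext h)
  · rintro ⟨⟨m', hmC⟩, ⟨t, ht, htop⟩, rfl⟩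
    obtain ⟨s₀, hs₀⟩ := exists_slater r
    haveI hs01 := hs₀.1
    set u := slaterComb C (slaterLift C t) s₀ with hu
    have hu_sto : IsStrictTotalOrder V u := comb_lift_sto C ht.1 hs01
    refine ⟨u, ⟨hu_sto, ?_⟩, ?_⟩
    · intro s' hs'
      have hle := hs₀.2 s' hs'
      have key : slaterScore r s₀ ≤ slaterScore r u := by
        have hdu := score_decomp r C hT hdom u
        have hds := score_decomp r C hT hdom s₀
        have e1 : SlaterS1 r C u = SlaterS1 r C (slaterLift C t) := comb_S1 r C _ s₀
        have e2 : SlaterS2 r C u = SlaterS2 r C s₀ := comb_S2 r C _ s₀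
        have e3u : SlaterS3 r C u = C ×ˢ Cᶜ :=
          S3_eq_prod r C hdom u fun c hc v hv => Or.inl ⟨hc, hv⟩
        have e3s : SlaterS3 r C s₀ = C ×ˢ Cᶜ := S3_eq_prod r C hdom s₀ (resp s₀ hs₀)
        have eL := S1_lift r C t
        have eS := score_sub r C s₀
        have hsub := ht.2 (fun a b : C => s₀ (a : V) (b : V)) (sto_restrict C hs01)
        rw [hdu, hds, e1, e2, e3u, e3s]
        omega
      exact le_trans hle key
    · intro x hx
      by_cases hxC : x ∈ C
      · exact Or.inr (Or.inl ⟨hmC, hxC,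
          ⟨hmC, hxC, htop ⟨x, hxC⟩ fun h => hx (congrArg Subtype.val h)⟩⟩)
      · exact Or.inl ⟨hmC, hxC⟩
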